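/- arXiv:1007.2213 — 2 statements merged into one kernel-verified Lean document; each statement's English description precedes it below -/
import Mathlib

section
/- For positive integers n and k with k ≥ 2, if the Tate twist r of the n-th symmetric power of a weight-k ordinary modular Galois representation is exceptional and critical (i.e., the multiset of Hodge–Tate-type exponents { j(k-1) + r : 0 ≤ j ≤ n } contains 0 coming from an unramified graded piece with unit Frobenius eigenvalue, which by the Hasse/Weil bounds forces the diagonal character to be trivial times cyclotomic to the power 0 exactly when j(k-1) + r = 0 with j = n/2), then n ≡ 2 (mod 4), r = (n/2)(1-k) or r = (n/2)(1-k)+1, and k is even. -/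
private lemma card_range_filter_odd (N : ℕ) :
    ((Finset.range N).filter (fun i => Odd i)).card = N / 2 := by
  induction N with
  | zero => simp
  | succ n ih =>
    rw [Finset.range_add_one, Finset.filter_insert]
    by_cases h : Odd n
    · rw [if_pos h, Finset.card_insert_of_notMem (by simp), ih]
      rw [Nat.odd_iff] at h
      omega
    · rw [if_neg h, ih]
      rw [Nat.odd_iff] at h
      omega

private lemma card_range_filter_even (N : ℕ) :
    ((Finset.range N).filter (fun i => Even i)).card = (N + 1) / 2 := by
  induction N with
  | zero => simp
  | succ n ih =>
    rw [Finset.range_add_one, Finset.filter_insert]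
    by_cases h : Even n
    · rw [if_pos h, Finset.card_insert_of_notMem (by simp), ih]
      rw [Nat.even_iff] at h
      omega
    · rw [if_neg h, ih]
      rw [Nat.even_iff] at h
      omega


/-- Combinatorial version of the determination of exceptional, critical Tate twists of
`Sym^n ρ_f`.  The ordinary filtration of `Sym^n ρ_f (r)` has graded pieces on which inertia
acts by `χ^(j(k-1)+r)` and Frobenius acts by `α^(n-2j)` (up to powers of `p`), where `α` is a
`p`-adic unit with `α^t ≠ 1` for `t ≠ 0` (Weil bounds).  Exceptionality says some graded piece
has `j(k-1)+r = 0` (exceptional subquotient `K`) or `j(k-1)+r = 1` (exceptional subquotient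
`K(1)`) together with trivial Frobenius action `α^(n-2j) = 1`.  Criticality says
`dim V/F¹V = dim V⁻`, i.e. the number of `j` with `j(k-1)+r ≤ 0` equals the number of `j`
with `j + r` odd.  Conclusion: `n ≡ 2 (mod 4)`, `k` is even, and
`r = (n/2)(1-k)` or `r = (n/2)(1-k) + 1`. -/
theorem exceptional_critical_twists {K : Type*} [Field K] (n k : ℕ) (r : ℤ) (α : Kˣ)
    (hn : 0 < n) (hk : 2 ≤ k)
    (hα : ∀ t : ℤ, t ≠ 0 → α ^ t ≠ 1)
    (hexc : ∃ j : ℕ, j ≤ n ∧ ((j : ℤ) * ((k : ℤ) - 1) + r = 0 ∨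
      (j : ℤ) * ((k : ℤ) - 1) + r = 1) ∧ α ^ ((n : ℤ) - 2 * (j : ℤ)) = 1)
    (hcrit : ((Finset.range (n + 1)).filter
        (fun (j : ℕ) => (j : ℤ) * ((k : ℤ) - 1) + r ≤ 0)).card =
      ((Finset.range (n + 1)).filter (fun (j : ℕ) => Odd ((j : ℤ) + r))).card) :
    n % 4 = 2 ∧ Even k ∧
      (r = ((n / 2 : ℕ) : ℤ) * (1 - (k : ℤ)) ∨
        r = ((n / 2 : ℕ) : ℤ) * (1 - (k : ℤ)) + 1) := by
  obtain ⟨j, hjn, hjr, hα1⟩ := hexc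
  have h2j : (n : ℤ) - 2 * (j : ℤ) = 0 := by
    by_contra h
    exact hα _ h hα1
  have hnj : n = 2 * j := by omega
  have hk1 : (1 : ℤ) ≤ (k : ℤ) - 1 := by
    have : (2 : ℤ) ≤ (k : ℤ) := by exact_mod_cast hk
    linarith
  -- compute the RHS cardinality
  have hRHS : ((Finset.range (n + 1)).filter (fun (i : ℕ) => Odd ((i : ℤ) + r))).card
      = if Even r then j else j + 1 := by
    rcases Int.even_or_odd r with he | ho
    · rw [if_pos he]
      have he' : r % 2 = 0 := Int.even_iff.mp he
      have hfe : ((Finset.range (n + 1)).filter (fun (i : ℕ) => Odd ((i : ℤ) + r)))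
          = (Finset.range (n + 1)).filter (fun i => Odd i) := by
        apply Finset.filter_congr
        intro i _
        rw [Int.odd_iff, Nat.odd_iff]
        constructor <;> intro h <;> omega
      rw [hfe, card_range_filter_odd]
      omega
    · rw [if_neg (by simpa using (Int.not_even_iff_odd.mpr ho))]
      have ho' : r % 2 = 1 := Int.odd_iff.mp ho
      have hfe : ((Finset.range (n + 1)).filter (fun (i : ℕ) => Odd ((i : ℤ) + r)))
          = (Finset.range (n + 1)).filter (fun i => Even i) := by
        apply Finset.filter_congr
        intro i _
        rw [Int.odd_iff, Nat.even_iff]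
        constructor <;> intro h <;> omega
      rw [hfe, card_range_filter_even]
      omega
  -- the two exceptional cases
  have key : Odd ((j : ℤ) * ((k : ℤ) - 1)) ∧
      (r = (j : ℤ) * (1 - (k : ℤ)) ∨ r = (j : ℤ) * (1 - (k : ℤ)) + 1) := by
    rcases hjr with hr0 | hr1
    · -- j(k-1)+r = 0 : LHS filter is range (j+1)
      have hLHS : ((Finset.range (n + 1)).filter
          (fun (i : ℕ) => (i : ℤ) * ((k : ℤ) - 1) + r ≤ 0)) = Finset.range (j + 1) := by
        ext i
        simp only [Finset.mem_filter, Finset.mem_range]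
        constructor
        · rintro ⟨hi, hcond⟩
          have h1 : (i : ℤ) * ((k : ℤ) - 1) ≤ (j : ℤ) * ((k : ℤ) - 1) := by linarith
          have h2 : (i : ℤ) ≤ (j : ℤ) := le_of_mul_le_mul_right h1 (by linarith)
          omega
        · intro hi
          have h2 : (i : ℤ) ≤ (j : ℤ) := by omega
          refine ⟨by omega, ?_⟩
          have h1 := mul_le_mul_of_nonneg_right h2 (show (0:ℤ) ≤ (k:ℤ) - 1 by linarith)
          linarith
      rw [hLHS, Finset.card_range, hRHS] at hcrit
      have hodd : ¬ Even r := by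
        by_cases h : Even r
        · rw [if_pos h] at hcrit; omega
        · exact h
      rw [if_neg hodd] at hcrit
      have hor : Odd r := Int.not_even_iff_odd.mp hodd
      constructor
      · have : (j : ℤ) * ((k : ℤ) - 1) = -r := by linarith
        rw [this]
        exact hor.neg
      · left
        have : (j : ℤ) * (1 - (k : ℤ)) = -((j : ℤ) * ((k : ℤ) - 1)) := by ring
        rw [this]
        linarith
    · -- j(k-1)+r = 1 : LHS filter is range j
      have hLHS : ((Finset.range (n + 1)).filter
          (fun (i : ℕ) => (i : ℤ) * ((k : ℤ) - 1) + r ≤ 0)) = Finset.range j := by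
        ext i
        simp only [Finset.mem_filter, Finset.mem_range]
        constructor
        · rintro ⟨hi, hcond⟩
          have h1 : (i : ℤ) * ((k : ℤ) - 1) < (j : ℤ) * ((k : ℤ) - 1) := by linarith
          have h2 : (i : ℤ) < (j : ℤ) := lt_of_mul_lt_mul_right h1 (by linarith)
          omega
        · intro hi
          have h2 : (i : ℤ) + 1 ≤ (j : ℤ) := by omega
          refine ⟨by omega, ?_⟩
          have h1 := mul_le_mul_of_nonneg_right h2 (show (0:ℤ) ≤ (k:ℤ) - 1 by linarith)
          rw [add_mul, one_mul] at h1
          linarith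
      rw [hLHS, Finset.card_range, hRHS] at hcrit
      have heven : Even r := by
        by_cases h : Even r
        · exact h
        · rw [if_neg h] at hcrit; omega
      rw [if_pos heven] at hcrit
      have he' : r % 2 = 0 := Int.even_iff.mp heven
      constructor
      · rw [Int.odd_iff]
        have : (j : ℤ) * ((k : ℤ) - 1) = 1 - r := by linarith
        omega
      · right
        have : (j : ℤ) * (1 - (k : ℤ)) = -((j : ℤ) * ((k : ℤ) - 1)) := by ring
        rw [this]
        linarith
  obtain ⟨hoddP, hrval⟩ := key
  obtain ⟨hoj, hok⟩ := (Int.odd_mul).mp hoddP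
  have hj1 : j % 2 = 1 := by
    have : Odd j := by exact_mod_cast hoj
    exact Nat.odd_iff.mp this
  have hkeven : Even k := by
    obtain ⟨t, ht⟩ := hok
    have : (k : ℤ) = 2 * t + 2 := by linarith
    rw [Nat.even_iff]
    omega
  have hn2 : (n / 2 : ℕ) = j := by omega
  refine ⟨by omega, hkeven, ?_⟩
  rw [hn2]
  exact hrval
end

section
/- Conversely, if c: G → M_n(K) is a 1-cocycle for the adjoint action of ρ, then g ↦ ρ(g)(1 + ε c(g)) defines a group homomorphism G → GL_n(K[ε]) lifting ρ, and two such cocycles define K[ε]-conjugate lifts if and only if they differ by a coboundary g ↦ Ad(ρ(g)^{-1})X − X. -/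
open Matrix TrivSqZeroExt

section helpers
variable {K : Type*} [CommRing K] {n : ℕ}

lemma mapInl_one : (1 : Matrix (Fin n) (Fin n) K).map (inl : K → DualNumber K) = 1 := by
  ext i j <;> by_cases h : i = j <;>
    simp [Matrix.map_apply, Matrix.one_apply, h]

lemma mapInl_mul (A B : Matrix (Fin n) (Fin n) K) :
    (A * B).map (inl : K → DualNumber K) = A.map inl * B.map inl := by
  ext i j <;>
    simp [Matrix.map_apply, Matrix.mul_apply, fst_sum, snd_sum, fst_mul, snd_mul]

lemma mapInr_add (A B : Matrix (Fin n) (Fin n) K) :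
    (A + B).map (inr : K → DualNumber K) = A.map inr + B.map inr := by
  ext i j <;> simp [Matrix.map_apply]

lemma mapInr_zero : (0 : Matrix (Fin n) (Fin n) K).map (inr : K → DualNumber K) = 0 := by
  ext i j <;> simp [Matrix.map_apply]

lemma inlMat_mul_inrMat (A B : Matrix (Fin n) (Fin n) K) :
    A.map (inl : K → DualNumber K) * B.map inr = (A * B).map inr := by
  ext i j <;>
    simp [Matrix.map_apply, Matrix.mul_apply, fst_sum, snd_sum, fst_mul, snd_mul, mul_comm]

lemma inrMat_mul_inlMat (A B : Matrix (Fin n) (Fin n) K) :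
    A.map (inr : K → DualNumber K) * B.map inl = (A * B).map inr := by
  ext i j <;>
    simp [Matrix.map_apply, Matrix.mul_apply, fst_sum, snd_sum, fst_mul, snd_mul, mul_comm]

lemma inrMat_mul_inrMat (A B : Matrix (Fin n) (Fin n) K) :
    A.map (inr : K → DualNumber K) * B.map inr = 0 := by
  ext i j <;>
    simp [Matrix.map_apply, Matrix.mul_apply, fst_sum, snd_sum, fst_mul, snd_mul]

lemma map_fst_inl (A : Matrix (Fin n) (Fin n) K) :
    (A.map (inl : K → DualNumber K)).map fst = A := by
  ext i j; simp [Matrix.map_apply]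

lemma map_fst_inr (A : Matrix (Fin n) (Fin n) K) :
    (A.map (inr : K → DualNumber K)).map fst = 0 := by
  ext i j; simp [Matrix.map_apply]

lemma map_fst_add (A B : Matrix (Fin n) (Fin n) (DualNumber K)) :
    (A + B).map (fst : DualNumber K → K) = A.map fst + B.map fst := by
  ext i j; simp [Matrix.map_apply]

lemma mapInr_inj {A B : Matrix (Fin n) (Fin n) K}
    (h : A.map (inr : K → DualNumber K) = B.map inr) : A = B := by
  ext i j
  have := congrFun (congrFun h i) j
  simpa [Matrix.map_apply, TrivSqZeroExt.ext_iff] using this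

/-- The key conjugation computation over dual numbers, reduced to matrices over `K`. -/
lemma conj_step (A B C X : Matrix (Fin n) (Fin n) K) :
    (1 + X.map (inr : K → DualNumber K)) * (A.map inl + B.map inr) =
      (A.map inl + C.map inr) * (1 + X.map inr) ↔ X * A + B = C + A * X := by
  constructor
  · intro h
    simp only [add_mul, mul_add, one_mul, mul_one, inrMat_mul_inlMat, inlMat_mul_inrMat,
      inrMat_mul_inrMat, add_zero, add_assoc, ← mapInr_add] at h
    exact mapInr_inj (add_left_cancel h)
  · intro h
    simp only [add_mul, mul_add, one_mul, mul_one, inrMat_mul_inlMat, inlMat_mul_inrMat,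
      inrMat_mul_inrMat, add_zero, add_assoc, ← mapInr_add, h]

end helpers

def cocycleLift {K G : Type*} [CommRing K] [Group G] {n : ℕ}
    (ρ : G →* GL (Fin n) K) (c : G → Matrix (Fin n) (Fin n) K) :
    G → Matrix (Fin n) (Fin n) (DualNumber K) := fun g =>
  ((ρ g : Matrix (Fin n) (Fin n) K)).map (TrivSqZeroExt.inl : K → DualNumber K) *
    (1 + (c g).map (TrivSqZeroExt.inr : K → DualNumber K))

lemma cocycleLift_eq {K G : Type*} [CommRing K] [Group G] {n : ℕ}
    (ρ : G →* GL (Fin n) K) (c : G → Matrix (Fin n) (Fin n) K) (g : G) :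
    cocycleLift ρ c g = ((ρ g : Matrix (Fin n) (Fin n) K)).map (inl : K → DualNumber K)
      + ((ρ g : Matrix (Fin n) (Fin n) K) * c g).map inr := by
  unfold cocycleLift
  rw [mul_add, mul_one, inlMat_mul_inrMat]

/-- Converse of the deformation–cocycle correspondence: if `c` is a 1-cocycle for the adjoint
action of `ρ` (i.e. `c(gh) = ρ(h)⁻¹ c(g) ρ(h) + c(h)`), then `g ↦ ρ(g)(1 + ε c(g))` is a group
homomorphism `G → GLₙ(K[ε])` lifting `ρ` (each value is invertible, reducing mod `ε` gives back
`ρ`); and two cocycles `c₁, c₂` define `K[ε]`-conjugate lifts (conjugate by a matrix `1 + εX`)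
if and only if they differ by a coboundary `g ↦ ρ(g)⁻¹ X ρ(g) − X`. -/
theorem cocycle_gives_lift_and_conjugacy {K G : Type*} [CommRing K] [Group G] {n : ℕ}
    (ρ : G →* GL (Fin n) K) (c c₁ c₂ : G → Matrix (Fin n) (Fin n) K)
    (hc : ∀ g h : G, c (g * h) =
      (↑(ρ h⁻¹) : Matrix (Fin n) (Fin n) K) * c g * (↑(ρ h) : Matrix (Fin n) (Fin n) K) + c h)
    (hc₁ : ∀ g h : G, c₁ (g * h) =
      (↑(ρ h⁻¹) : Matrix (Fin n) (Fin n) K) * c₁ g * (↑(ρ h) : Matrix (Fin n) (Fin n) K) + c₁ h)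
    (hc₂ : ∀ g h : G, c₂ (g * h) =
      (↑(ρ h⁻¹) : Matrix (Fin n) (Fin n) K) * c₂ g * (↑(ρ h) : Matrix (Fin n) (Fin n) K) + c₂ h) :
    (∀ g h : G, cocycleLift ρ c (g * h) = cocycleLift ρ c g * cocycleLift ρ c h) ∧
    cocycleLift ρ c 1 = 1 ∧
    (∀ g : G, IsUnit (cocycleLift ρ c g)) ∧
    (∀ g : G, (cocycleLift ρ c g).map (TrivSqZeroExt.fst : DualNumber K → K) =
      (↑(ρ g) : Matrix (Fin n) (Fin n) K)) ∧
    ((∃ X : Matrix (Fin n) (Fin n) K, ∀ g : G,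
        (1 + X.map (TrivSqZeroExt.inr : K → DualNumber K)) * cocycleLift ρ c₁ g =
          cocycleLift ρ c₂ g * (1 + X.map (TrivSqZeroExt.inr : K → DualNumber K))) ↔
      (∃ X : Matrix (Fin n) (Fin n) K, ∀ g : G,
        c₂ g - c₁ g =
          (↑(ρ g⁻¹) : Matrix (Fin n) (Fin n) K) * X * (↑(ρ g) : Matrix (Fin n) (Fin n) K) - X)) := by
  -- basic invertibility facts
  have hinv1 : ∀ g : G, (↑(ρ g) : Matrix (Fin n) (Fin n) K) * (↑(ρ g⁻¹) : Matrix (Fin n) (Fin n) K) = 1 := by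
    intro g
    rw [← Units.val_mul, ← _root_.map_mul, mul_inv_cancel, _root_.map_one, Units.val_one]
  have hinv2 : ∀ g : G, (↑(ρ g⁻¹) : Matrix (Fin n) (Fin n) K) * (↑(ρ g) : Matrix (Fin n) (Fin n) K) = 1 := by
    intro g
    rw [← Units.val_mul, ← _root_.map_mul, inv_mul_cancel, _root_.map_one, Units.val_one]
  have hmul : ∀ g h : G, (↑(ρ (g * h)) : Matrix (Fin n) (Fin n) K) =
      (↑(ρ g) : Matrix (Fin n) (Fin n) K) * (↑(ρ h) : Matrix (Fin n) (Fin n) K) := by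
    intro g h; rw [_root_.map_mul, Units.val_mul]
  -- homomorphism property
  have Hhom : ∀ g h : G, cocycleLift ρ c (g * h) = cocycleLift ρ c g * cocycleLift ρ c h := by
    intro g h
    have hcanc : (↑(ρ h) : Matrix (Fin n) (Fin n) K) *
        ((↑(ρ h⁻¹) : Matrix (Fin n) (Fin n) K) * c g * (↑(ρ h) : Matrix (Fin n) (Fin n) K)) =
        c g * (↑(ρ h) : Matrix (Fin n) (Fin n) K) := by
      rw [← mul_assoc, ← mul_assoc, hinv1, one_mul]
    have e1 : ((↑(ρ g) : Matrix (Fin n) (Fin n) K) * (↑(ρ h) : Matrix (Fin n) (Fin n) K)) *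
        ((↑(ρ h⁻¹) : Matrix (Fin n) (Fin n) K) * c g * (↑(ρ h) : Matrix (Fin n) (Fin n) K) + c h) =
        ((↑(ρ g) : Matrix (Fin n) (Fin n) K) * c g) * (↑(ρ h) : Matrix (Fin n) (Fin n) K) +
          ((↑(ρ g) : Matrix (Fin n) (Fin n) K) * (↑(ρ h) : Matrix (Fin n) (Fin n) K)) * c h := by
      rw [mul_add]
      congr 1
      rw [mul_assoc, hcanc, ← mul_assoc]
    rw [cocycleLift_eq, cocycleLift_eq, cocycleLift_eq, hc, hmul, e1]
    simp only [add_mul, mul_add, inlMat_mul_inrMat, inrMat_mul_inlMat, inrMat_mul_inrMat,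
      add_zero, ← mapInl_mul, mapInr_add, mul_assoc]
    abel
  constructor
  · exact Hhom
  have hc1 : c 1 = 0 := by
    have h1 := hc 1 1
    simp only [mul_one, inv_one, _root_.map_one, Units.val_one, one_mul] at h1
    have h2 : c 1 + 0 = c 1 + c 1 := by rw [add_zero]; exact h1
    exact (add_left_cancel h2).symm
  have Hone : cocycleLift ρ c 1 = 1 := by
    rw [cocycleLift_eq, hc1, mul_zero, mapInr_zero, add_zero, _root_.map_one, Units.val_one,
      mapInl_one]
  refine ⟨Hone, ?_, ?_, ?_⟩
  · intro g
    refine ⟨⟨cocycleLift ρ c g, cocycleLift ρ c g⁻¹, ?_, ?_⟩, rfl⟩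
    · rw [← Hhom, mul_inv_cancel, Hone]
    · rw [← Hhom, inv_mul_cancel, Hone]
  · intro g
    rw [cocycleLift_eq, map_fst_add, map_fst_inl, map_fst_inr, add_zero]
  · -- conjugacy criterion
    have key : ∀ (X : Matrix (Fin n) (Fin n) K) (g : G),
        ((1 + X.map (inr : K → DualNumber K)) * cocycleLift ρ c₁ g =
          cocycleLift ρ c₂ g * (1 + X.map inr)) ↔
        (c₂ g - c₁ g = (↑(ρ g⁻¹) : Matrix (Fin n) (Fin n) K) * X *
          (↑(ρ g) : Matrix (Fin n) (Fin n) K) - X) := by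
      intro X g
      rw [cocycleLift_eq, cocycleLift_eq, conj_step]
      constructor
      · intro h
        have h' := congrArg (fun M => (↑(ρ g⁻¹) : Matrix (Fin n) (Fin n) K) * M) h
        simp only [mul_add, ← mul_assoc, hinv2, one_mul] at h'
        rw [sub_eq_sub_iff_add_eq_add]
        exact h'.symm
      · intro h
        have h2 : c₂ g + X = (↑(ρ g⁻¹) : Matrix (Fin n) (Fin n) K) * X *
            (↑(ρ g) : Matrix (Fin n) (Fin n) K) + c₁ g := by
          rw [sub_eq_sub_iff_add_eq_add] at h; exact h
        have h3 := congrArg (fun M => (↑(ρ g) : Matrix (Fin n) (Fin n) K) * M) h2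
        simp only [mul_add, ← mul_assoc, hinv1, one_mul] at h3
        exact h3.symm
    constructor
    · rintro ⟨X, hX⟩; exact ⟨X, fun g => (key X g).mp (hX g)⟩
    · rintro ⟨X, hX⟩; exact ⟨X, fun g => (key X g).mpr (hX g)⟩
end
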